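/- Let Δ be a finite simplicial complex over a field k, x a vertex of Δ, and define reg_k(Δ) = max{ j : H̃_{j−1}(Δ[S]; k) ≠ 0 for some S ⊆ V(Δ) }, where Δ[S] is the induced subcomplex on S. Then reg_k(Δ) ≤ max{ reg_k(del_Δ(x)), reg_k(lk_Δ(x)) + 1 }. -/

import Mathlib

/-- An abstract simplicial complex on the vertex type `V`. -/
structure SComplex (V : Type*) where
  faces : Set (Finset V)
  down_closed : ∀ ⦃s t : Finset V⦄, s ∈ faces → t ⊆ s → t ∈ faces

variable {V : Type*}

/-- The induced subcomplex `Δ[S]` on a set `S` of vertices. -/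
def SComplex.restrict (K : SComplex V) (S : Set V) : SComplex V where
  faces := {s | s ∈ K.faces ∧ ↑s ⊆ S}
  down_closed := fun _ _ hs hts =>
    ⟨K.down_closed hs.1 hts, subset_trans (Finset.coe_subset.2 hts) hs.2⟩

/-- The deletion `del_Δ(x)`: faces of `Δ` not containing `x`. -/
def SComplex.deletion (K : SComplex V) (x : V) : SComplex V where
  faces := {s | s ∈ K.faces ∧ x ∉ s}
  down_closed := fun _ _ hs hts => ⟨K.down_closed hs.1 hts, fun hx => hs.2 (hts hx)⟩

/-- The link `lk_Δ(x)`: faces `F` of `Δ` with `x ∉ F` and `F ∪ {x} ∈ Δ`. -/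
def SComplex.link [DecidableEq V] (K : SComplex V) (x : V) : SComplex V where
  faces := {s | s ∈ K.faces ∧ x ∉ s ∧ insert x s ∈ K.faces}
  down_closed := fun _ _ hs hts =>
    ⟨K.down_closed hs.1 hts, fun hx => hs.2.1 (hts hx),
      K.down_closed hs.2.2 (Finset.insert_subset_insert x hts)⟩

/-- Simplicial `m`-chains (spanned by the faces of cardinality `m`) with coefficients in
`k`.  The chains of cardinality `m` sit in homological degree `m - 1`; in particular
cardinality `0` (the empty face) gives the augmentation, so the resulting homology is
reduced homology. -/
abbrev SComplex.chains (K : SComplex V) (k : Type*) [Field k] (m : ℕ) :=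
  {s : Finset V // s ∈ K.faces ∧ s.card = m} → k

open Classical in
/-- The simplicial boundary map, expressed dually on coordinates: the coefficient of a face
`τ` of cardinality `m` in the boundary of a chain `c` is
`∑_{v ∉ τ, insert v τ ∈ K} (-1)^{|{w ∈ τ : w < v}|} · c (insert v τ)`. -/
noncomputable def SComplex.boundary [Fintype V] [LinearOrder V] (K : SComplex V)
    (k : Type*) [Field k] (m : ℕ) :
    K.chains k (m + 1) →ₗ[k] K.chains k m :=
  LinearMap.pi fun τ =>
    ∑ v : V,
      if h : v ∉ τ.1 ∧ insert v τ.1 ∈ K.faces then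
        ((-1 : k) ^ ((τ.1.filter fun w => w < v).card)) •
          LinearMap.proj (⟨insert v τ.1, h.2, by
            rw [Finset.card_insert_of_notMem h.1, τ.2.2]⟩ :
            {s : Finset V // s ∈ K.faces ∧ s.card = m + 1})
      else 0

/-- The cycles in cardinality `m`: the kernel of the boundary map (everything in
cardinality `0`, where there is no boundary map below). -/
noncomputable def SComplex.cycles [Fintype V] [LinearOrder V] (K : SComplex V)
    (k : Type*) [Field k] : (m : ℕ) → Submodule k (K.chains k m)
  | 0 => ⊤
  | (m + 1) => LinearMap.ker (K.boundary k m)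

/-- The reduced simplicial homology `H̃_{m-1}(K; k)`, computed at the chains spanned by
faces of cardinality `m` (so `m = 0` corresponds to `H̃_{-1}`): cycles modulo boundaries. -/
noncomputable def SComplex.redHomology [Fintype V] [LinearOrder V] (K : SComplex V)
    (k : Type*) [Field k] (m : ℕ) : Type _ :=
  ↥(K.cycles k m) ⧸
    Submodule.comap (K.cycles k m).subtype (LinearMap.range (K.boundary k m))

/-- The Castelnuovo–Mumford regularity of `Δ` over `k`:
`reg_k(Δ) = max{ j : H̃_{j-1}(Δ[S]; k) ≠ 0 for some S ⊆ V }`. -/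
noncomputable def SComplex.reg [Fintype V] [LinearOrder V] (K : SComplex V)
    (k : Type*) [Field k] : ℕ :=
  sSup {j : ℕ | ∃ S : Set V, Nontrivial ((K.restrict S).redHomology k j)}

namespace SComplexMV

open SComplex Finset

set_option linter.unusedSectionVars false

variable {V : Type*} [LinearOrder V] [Fintype V] {k : Type*} [Field k]

open Classical in
lemma boundary_apply (K : SComplex V) (m : ℕ) (z : K.chains k (m+1))
    (τ : {s : Finset V // s ∈ K.faces ∧ s.card = m}) :
    K.boundary k m z τ =
      ∑ v : V, if h : v ∉ τ.1 ∧ insert v τ.1 ∈ K.faces then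
        ((-1 : k) ^ ((τ.1.filter fun w => w < v).card)) *
          z ⟨insert v τ.1, h.2, by rw [Finset.card_insert_of_notMem h.1, τ.2.2]⟩
      else 0 := by
  rw [SComplex.boundary, LinearMap.pi_apply, LinearMap.sum_apply]
  refine Finset.sum_congr rfl fun v _ => ?_
  by_cases h : v ∉ τ.1 ∧ insert v τ.1 ∈ K.faces
  · rw [dif_pos h, dif_pos h, LinearMap.smul_apply, LinearMap.proj_apply, smul_eq_mul]
  · rw [dif_neg h, dif_neg h, LinearMap.zero_apply]

/-- The sign `(-1)^{|{w ∈ τ : w < v}|}`. -/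
def ee (k : Type*) [Field k] (τ : Finset V) (v : V) : k :=
  (-1 : k) ^ ((τ.filter fun w => w < v).card)

lemma ee_insert {u : V} (v : V) {τ : Finset V} (hu : u ∉ τ) :
    ee k (insert u τ) v = (if u < v then (-1 : k) else 1) * ee k τ v := by
  rw [ee, ee, Finset.filter_insert]
  split_ifs with h
  · rw [Finset.card_insert_of_notMem (fun hc => hu (Finset.mem_of_mem_filter u hc)),
      pow_succ, mul_comm]
  · rw [one_mul]

lemma ee_sq (τ : Finset V) (v : V) : ee k τ v * ee k τ v = 1 := by
  rw [ee, ← pow_add]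
  exact Even.neg_one_pow ⟨_, rfl⟩

lemma ee_ne_zero (τ : Finset V) (v : V) : ee k τ v ≠ 0 :=
  pow_ne_zero _ (neg_ne_zero.mpr one_ne_zero)

lemma if_swap_mul {u v : V} (h : u ≠ v) :
    (if u < v then (-1 : k) else 1) * (if v < u then (-1 : k) else 1) = -1 := by
  rcases lt_or_gt_of_ne h with h' | h'
  · rw [if_pos h', if_neg (asymm h'), mul_one]
  · rw [if_neg (asymm h'), if_pos h', one_mul]

lemma ee_swap' {u v : V} {τ : Finset V} (huv : u ≠ v) (hu : u ∉ τ) (hv : v ∉ τ) :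
    ee k (insert u τ) v * ee k (insert v τ) u = -(ee k τ u * ee k τ v) := by
  rw [ee_insert v hu, ee_insert u hv]
  rcases lt_or_gt_of_ne huv with h' | h'
  · rw [if_pos h', if_neg (asymm h')]; ring
  · rw [if_neg (asymm h'), if_pos h']; ring

/-- key sign identity used in the anticommutation relations -/
lemma ee_swap {u v : V} {τ : Finset V} (huv : u ≠ v) (hu : u ∉ τ) (hv : v ∉ τ) :
    ee k τ u * ee k (insert u τ) v = -(ee k τ v * ee k (insert v τ) u) := by
  rw [ee_insert v hu, ee_insert u hv]
  rcases lt_or_gt_of_ne huv with h' | h'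
  · rw [if_pos h', if_neg (asymm h')]; ring
  · rw [if_neg (asymm h'), if_pos h']; ring


section Maps

variable (k) (K : SComplex V) (x : V)

/-- Restriction of a chain of `K` to the deletion. -/
def rho (m : ℕ) (z : K.chains k m) : (K.deletion x).chains k m :=
  fun σ => z ⟨σ.1, σ.2.1.1, σ.2.2⟩

open Classical in
/-- Extension by zero from the deletion to `K`. -/
noncomputable def iota (m : ℕ) (c : (K.deletion x).chains k m) : K.chains k m :=
  fun σ => if h : x ∈ σ.1 then 0 else c ⟨σ.1, ⟨σ.2.1, h⟩, σ.2.2⟩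

/-- The "x-part" of a chain of `K`, as a chain of the link (with sign). -/
def psi (m : ℕ) (z : K.chains k (m+1)) : (K.link x).chains k m :=
  fun G => ee k G.1 x * z ⟨insert x G.1, G.2.1.2.2,
    by rw [Finset.card_insert_of_notMem G.2.1.2.1, G.2.2]⟩

open Classical in
/-- Inclusion of link chains as the "x-part" of chains of `K` (with sign). -/
noncomputable def phi (m : ℕ) (c : (K.link x).chains k m) : K.chains k (m+1) :=
  fun F => if h : x ∈ F.1 then
      ee k (F.1.erase x) x * c ⟨F.1.erase x,
        ⟨K.down_closed F.2.1 (Finset.erase_subset x F.1), Finset.notMem_erase x F.1,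
          by rw [Finset.insert_erase h]; exact F.2.1⟩,
        by rw [Finset.card_erase_of_mem h, F.2.2, Nat.add_sub_cancel]⟩
    else 0

open Classical in
/-- Extension by zero from the link to `K` (no sign, no shift). -/
noncomputable def extLK (m : ℕ) (c : (K.link x).chains k m) : K.chains k m :=
  fun τ => if h : x ∉ τ.1 ∧ insert x τ.1 ∈ K.faces then
      c ⟨τ.1, ⟨τ.2.1, h.1, h.2⟩, τ.2.2⟩ else 0

open Classical in
/-- Extension by zero from the link to the deletion. -/
noncomputable def extLD (m : ℕ) (c : (K.link x).chains k m) : (K.deletion x).chains k m :=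
  fun σ => if h : insert x σ.1 ∈ K.faces then
      c ⟨σ.1, ⟨σ.2.1.1, σ.2.1.2, h⟩, σ.2.2⟩ else 0

end Maps

section Rels

variable {K : SComplex V} {x : V}

omit [LinearOrder V] [Fintype V] in
lemma chain_congr {m : ℕ} (c : K.chains k m) {s t : Finset V} (h : s = t)
    {ps : s ∈ K.faces ∧ s.card = m} {pt : t ∈ K.faces ∧ t.card = m} :
    c ⟨s, ps⟩ = c ⟨t, pt⟩ := by cases h; rfl

lemma psi_phi (m : ℕ) (c : (K.link x).chains k m) :
    psi k K x m (phi k K x m c) = c := by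
  funext G
  have hx : x ∉ G.1 := G.2.1.2.1
  have he : (insert x G.1).erase x = G.1 := Finset.erase_insert hx
  simp only [psi, phi, dif_pos (Finset.mem_insert_self x G.1)]
  rw [chain_congr (K := K.link x) c he (pt := G.2), he, ← mul_assoc, ee_sq, one_mul]

lemma psi_extLK (m : ℕ) (c : (K.link x).chains k (m+1)) :
    psi k K x m (extLK k K x (m+1) c) = 0 := by
  funext G
  simp only [psi, extLK]
  rw [dif_neg (fun h => h.1 (Finset.mem_insert_self x G.1)), mul_zero]
  rfl

lemma extLD_zero (m : ℕ) : extLD k K x m (0 : (K.link x).chains k m) = 0 := by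
  funext σ
  simp only [extLD]
  split <;> rfl

lemma psi_add (m : ℕ) (z w : K.chains k (m+1)) :
    psi k K x m (z + w) = psi k K x m z + psi k K x m w := by
  funext G
  simp only [psi, Pi.add_apply]
  ring

lemma eq_iota_rho (m : ℕ) (u : K.chains k (m+1)) (hu : psi k K x m u = 0) :
    u = iota k K x (m+1) (rho k K x (m+1) u) := by
  funext F
  by_cases hx : x ∈ F.1
  · rw [iota, dif_pos hx]
    have hG : F.1.erase x ∈ (K.link x).faces ∧ (F.1.erase x).card = m := by
      refine ⟨⟨K.down_closed F.2.1 (Finset.erase_subset x F.1), Finset.notMem_erase x F.1,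
        by rw [Finset.insert_erase hx]; exact F.2.1⟩, by
        rw [Finset.card_erase_of_mem hx, F.2.2, Nat.add_sub_cancel]⟩
    have h0 := congrFun hu ⟨F.1.erase x, hG⟩
    simp only [psi, Pi.zero_apply] at h0
    rcases mul_eq_zero.mp h0 with h | h
    · exact absurd h (ee_ne_zero _ _)
    · rw [← h]
      exact (chain_congr u (Finset.insert_erase hx)).symm
  · rw [iota, dif_neg hx]
    rfl

lemma eq_iota_rho₀ (u : K.chains k 0) :
    u = iota k K x 0 (rho k K x 0 u) := by
  funext F
  have : F.1 = ∅ := Finset.card_eq_zero.mp F.2.2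
  rw [iota, dif_neg (by rw [this]; exact Finset.notMem_empty x)]
  rfl

lemma mem_deletion_iff {s : Finset V} :
    s ∈ (K.deletion x).faces ↔ s ∈ K.faces ∧ x ∉ s := Iff.rfl

lemma mem_link_iff {s : Finset V} :
    s ∈ (K.link x).faces ↔ s ∈ K.faces ∧ x ∉ s ∧ insert x s ∈ K.faces := Iff.rfl

open Classical in
lemma boundary_apply' (K : SComplex V) (m : ℕ) (z : K.chains k (m+1)) (s : Finset V)
    (hsc : s ∈ K.faces ∧ s.card = m) :
    K.boundary k m z ⟨s, hsc⟩ =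
      ∑ v : V, if h : v ∉ s ∧ insert v s ∈ K.faces then
        ee k s v * z ⟨insert v s, h.2, by rw [Finset.card_insert_of_notMem h.1, hsc.2]⟩
      else 0 :=
  boundary_apply K m z ⟨s, hsc⟩

open Classical in
lemma boundary_iota (m : ℕ) (c : (K.deletion x).chains k (m+1)) :
    K.boundary k m (iota k K x (m+1) c) = iota k K x m ((K.deletion x).boundary k m c) := by
  funext τ
  obtain ⟨s, hsc⟩ := τ
  rw [boundary_apply' K m _ s hsc]
  by_cases hx : x ∈ s
  · simp only [iota, dif_pos hx]
    refine Finset.sum_eq_zero fun v _ => ?_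
    by_cases h : v ∉ s ∧ insert v s ∈ K.faces
    · rw [dif_pos h]
      simp only [iota, dif_pos (Finset.mem_insert_of_mem hx), mul_zero]
    · rw [dif_neg h]
  · have hsd : s ∈ (K.deletion x).faces ∧ s.card = m :=
      ⟨mem_deletion_iff.mpr ⟨hsc.1, hx⟩, hsc.2⟩
    have : iota k K x m ((K.deletion x).boundary k m c) ⟨s, hsc⟩ =
        (K.deletion x).boundary k m c ⟨s, hsd⟩ := by
      simp only [iota, dif_neg hx]
    rw [this, boundary_apply' (K.deletion x) m c s hsd]
    refine Finset.sum_congr rfl fun v _ => ?_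
    by_cases hvx : v = x
    · have hxv : x ∈ insert v s := by rw [hvx]; exact Finset.mem_insert_self x s
      rw [dif_neg (show ¬(v ∉ s ∧ insert v s ∈ (K.deletion x).faces) from
        fun hc' => (mem_deletion_iff.mp hc'.2).2 hxv)]
      by_cases h : v ∉ s ∧ insert v s ∈ K.faces
      · rw [dif_pos h]
        simp only [iota, dif_pos hxv, mul_zero]
      · rw [dif_neg h]
    · by_cases h : v ∉ s ∧ insert v s ∈ K.faces
      · have hx2 : x ∉ insert v s := by
          simp only [Finset.mem_insert]
          rintro (h' | h')
          · exact hvx h'.symm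
          · exact hx h'
        rw [dif_pos h, dif_pos (show v ∉ s ∧ insert v s ∈ (K.deletion x).faces from
            ⟨h.1, mem_deletion_iff.mpr ⟨h.2, hx2⟩⟩)]
        simp only [iota, dif_neg hx2]
      · rw [dif_neg h, dif_neg (show ¬(v ∉ s ∧ insert v s ∈ (K.deletion x).faces) from
          fun hc' => h ⟨hc'.1, (mem_deletion_iff.mp hc'.2).1⟩)]

open Classical in
lemma rho_boundary (m : ℕ) (z : K.chains k (m+1)) :
    rho k K x m (K.boundary k m z) =
      (K.deletion x).boundary k m (rho k K x (m+1) z) + extLD k K x m (psi k K x m z) := by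
  funext σ
  obtain ⟨s, hsd⟩ := σ
  have hx : x ∉ s := (mem_deletion_iff.mp hsd.1).2
  have hsK : s ∈ K.faces ∧ s.card = m := ⟨(mem_deletion_iff.mp hsd.1).1, hsd.2⟩
  have hL : rho k K x m (K.boundary k m z) ⟨s, hsd⟩ = K.boundary k m z ⟨s, hsK⟩ := rfl
  rw [hL, Pi.add_apply, boundary_apply' K m z s hsK,
    boundary_apply' (K.deletion x) m _ s hsd]
  have hT : extLD k K x m (psi k K x m z) ⟨s, hsd⟩ =
      ∑ v : V, if v = x then (if h : x ∉ s ∧ insert x s ∈ K.faces then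
        ee k s x * z ⟨insert x s, h.2, by rw [Finset.card_insert_of_notMem h.1, hsK.2]⟩
        else 0) else 0 := by
    rw [Finset.sum_ite_eq' Finset.univ x, if_pos (Finset.mem_univ x)]
    simp only [extLD, psi]
    by_cases h : insert x s ∈ K.faces
    · rw [dif_pos h, dif_pos ⟨hx, h⟩]
    · rw [dif_neg h, dif_neg (fun hc' => h hc'.2)]
  rw [hT, ← Finset.sum_add_distrib]
  refine Finset.sum_congr rfl fun v _ => ?_
  by_cases hvx : v = x
  · obtain rfl := hvx.symm
    rw [if_pos rfl, dif_neg (show ¬(x ∉ s ∧ insert x s ∈ (K.deletion x).faces) from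
      fun hc' => (mem_deletion_iff.mp hc'.2).2 (Finset.mem_insert_self x s)), zero_add]
  · rw [if_neg hvx, add_zero]
    by_cases h : v ∉ s ∧ insert v s ∈ K.faces
    · have hx2 : x ∉ insert v s := by
        simp only [Finset.mem_insert]
        rintro (h' | h')
        · exact hvx h'.symm
        · exact hx h'
      rw [dif_pos h, dif_pos (show v ∉ s ∧ insert v s ∈ (K.deletion x).faces from
        ⟨h.1, mem_deletion_iff.mpr ⟨h.2, hx2⟩⟩)]
      rfl
    · rw [dif_neg h, dif_neg (show ¬(v ∉ s ∧ insert v s ∈ (K.deletion x).faces) from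
        fun hc' => h ⟨hc'.1, (mem_deletion_iff.mp hc'.2).1⟩)]

open Classical in
lemma psi_boundary (m : ℕ) (z : K.chains k (m+2)) :
    psi k K x m (K.boundary k (m+1) z) =
      -((K.link x).boundary k m (psi k K x (m+1) z)) := by
  funext G
  obtain ⟨g, hgl⟩ := G
  obtain ⟨hgK, hgx, hgi⟩ := mem_link_iff.mp hgl.1
  have hcg : (insert x g).card = m + 1 := by
    rw [Finset.card_insert_of_notMem hgx, hgl.2]
  have hL : psi k K x m (K.boundary k m.succ z) ⟨g, hgl⟩ =
      ee k g x * K.boundary k (m+1) z ⟨insert x g, hgi, hcg⟩ := rfl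
  rw [hL, boundary_apply' K (m+1) z (insert x g) ⟨hgi, hcg⟩, Pi.neg_apply,
    boundary_apply' (K.link x) m _ g hgl, Finset.mul_sum, ← Finset.sum_neg_distrib]
  refine Finset.sum_congr rfl fun v _ => ?_
  simp only [psi]
  by_cases hq : v ∉ g ∧ v ≠ x ∧ insert v (insert x g) ∈ K.faces
  · obtain ⟨hvg, hvx, hK2⟩ := hq
    have hvixg : v ∉ insert x g := by
      simp only [Finset.mem_insert]
      rintro (h' | h')
      · exact hvx h'
      · exact hvg h'
    have hx2 : x ∉ insert v g := by
      simp only [Finset.mem_insert]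
      rintro (h' | h')
      · exact hvx h'.symm
      · exact hgx h'
    have hins : insert v (insert x g) = insert x (insert v g) := Finset.insert_comm v x g
    rw [dif_pos ⟨hvixg, hK2⟩, dif_pos (show v ∉ g ∧ insert v g ∈ (K.link x).faces from
      ⟨hvg, mem_link_iff.mpr ⟨K.down_closed (hins ▸ hK2) (Finset.subset_insert x (insert v g)),
        hx2, hins ▸ hK2⟩⟩)]
    simp only [hins]
    rw [← mul_assoc, ← mul_assoc, ee_swap (Ne.symm hvx) hgx hvg, neg_mul]
  · by_cases h1 : v ∉ insert x g ∧ insert v (insert x g) ∈ K.faces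
    · exact absurd ⟨fun hc => h1.1 (Finset.mem_insert_of_mem hc),
        fun hc => h1.1 (hc ▸ Finset.mem_insert_self v g), h1.2⟩ hq
    · rw [dif_neg h1, dif_neg (show ¬(v ∉ g ∧ insert v g ∈ (K.link x).faces) from ?_),
        mul_zero, neg_zero]
      rintro ⟨hvg, hl⟩
      obtain ⟨-, hx2, hK2⟩ := mem_link_iff.mp hl
      refine hq ⟨hvg, fun hc => hx2 (hc ▸ Finset.mem_insert_self v g), ?_⟩
      rwa [Finset.insert_comm v x g]

open Classical in
lemma boundary_phi (m : ℕ) (c : (K.link x).chains k (m+1)) :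
    K.boundary k (m+1) (phi k K x (m+1) c) =
      extLK k K x (m+1) c - phi k K x m ((K.link x).boundary k m c) := by
  funext F
  obtain ⟨f, hf⟩ := F
  rw [boundary_apply' K (m+1) _ f hf, Pi.sub_apply]
  by_cases hx : x ∈ f
  · -- the x-part: LHS = -φ(∂L c)
    set f' := f.erase x with hf'
    have hxf' : x ∉ f' := Finset.notMem_erase x f
    have hins : insert x f' = f := Finset.insert_erase hx
    have hf'c : f'.card = m := by rw [hf', Finset.card_erase_of_mem hx, hf.2, Nat.add_sub_cancel]
    have hf'L : f' ∈ (K.link x).faces ∧ f'.card = m :=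
      ⟨mem_link_iff.mpr ⟨K.down_closed hf.1 (Finset.erase_subset x f), hxf',
        by rw [hins]; exact hf.1⟩, hf'c⟩
    have hextz : extLK k K x (m+1) c ⟨f, hf⟩ = 0 := by
      rw [extLK, dif_neg (fun h => h.1 hx)]
    have hphi : phi k K x m ((K.link x).boundary k m c) ⟨f, hf⟩ =
        ee k f' x * (K.link x).boundary k m c ⟨f', hf'L⟩ := by
      simp only [phi, dif_pos hx, hf']
    rw [hextz, hphi, zero_sub, boundary_apply' (K.link x) m c f' hf'L, Finset.mul_sum,
      ← Finset.sum_neg_distrib]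
    refine Finset.sum_congr rfl fun v _ => ?_
    by_cases hq : v ∉ f ∧ insert v f ∈ K.faces
    · have hvx : v ≠ x := fun hc => hq.1 (hc ▸ hx)
      have hvf' : v ∉ f' := fun hc => hq.1 (Finset.mem_of_mem_erase hc)
      have herase : (insert v f).erase x = insert v f' :=
        Finset.erase_insert_of_ne hvx
      have hxivf' : x ∉ insert v f' := by
        simp only [Finset.mem_insert]
        rintro (h' | h')
        · exact hvx h'.symm
        · exact hxf' h'
      have hK2 : insert x (insert v f') ∈ K.faces := by
        rw [Finset.insert_comm, hins]; exact hq.2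
      rw [dif_pos hq, dif_pos (show v ∉ f' ∧ insert v f' ∈ (K.link x).faces from
        ⟨hvf', mem_link_iff.mpr ⟨K.down_closed hK2 (Finset.subset_insert _ _), hxivf', hK2⟩⟩)]
      simp only [phi, dif_pos (show x ∈ insert v f from Finset.mem_insert_of_mem hx), herase]
      have hee : ee k f v = ee k (insert x f') v := by rw [hins]
      rw [hee, ← mul_assoc, ee_swap' (Ne.symm hvx) hxf' hvf', ← mul_assoc, neg_mul]
    · rw [dif_neg hq, dif_neg (show ¬(v ∉ f' ∧ insert v f' ∈ (K.link x).faces) from ?_),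
        mul_zero, neg_zero]
      rintro ⟨hvf', hl⟩
      obtain ⟨-, hx2, hK2⟩ := mem_link_iff.mp hl
      refine hq ⟨?_, by rwa [Finset.insert_comm, hins] at hK2⟩
      rw [← hins]
      simp only [Finset.mem_insert]
      rintro (h' | h')
      · exact hx2 (h' ▸ Finset.mem_insert_self v f')
      · exact hvf' h'
  · -- not containing x: LHS = extLK c
    have hphi : phi k K x m ((K.link x).boundary k m c) ⟨f, hf⟩ = 0 := by
      rw [phi, dif_neg hx]
    rw [hphi, sub_zero]
    rw [Finset.sum_eq_single_of_mem x (Finset.mem_univ x)]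
    · by_cases h : x ∉ f ∧ insert x f ∈ K.faces
      · rw [dif_pos h]
        simp only [phi, dif_pos (Finset.mem_insert_self x f), Finset.erase_insert hx]
        rw [extLK, dif_pos h, ← mul_assoc, ee_sq, one_mul]
      · rw [dif_neg h, extLK, dif_neg h]
    · intro v _ hvx
      by_cases h : v ∉ f ∧ insert v f ∈ K.faces
      · rw [dif_pos h]
        simp only [phi, dif_neg (show x ∉ insert v f by
          simp only [Finset.mem_insert]
          rintro (h' | h')
          · exact hvx h'.symm
          · exact hx h'), mul_zero]
      · rw [dif_neg h]

open Classical in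
/-- summand for the double boundary -/
noncomputable def dd (K : SComplex V) (m : ℕ) (z : K.chains k (m+2)) (s : Finset V)
    (hs : s.card = m) (v u : V) : k :=
  if h : (v ∉ s ∧ u ∉ s ∧ v ≠ u) ∧ insert u (insert v s) ∈ K.faces then
    ee k s v * ee k (insert v s) u * z ⟨insert u (insert v s), h.2, by
      rw [Finset.card_insert_of_notMem (by
          simp only [Finset.mem_insert]
          rintro (h' | h')
          · exact h.1.2.2 h'.symm
          · exact h.1.2.1 h'),
        Finset.card_insert_of_notMem h.1.1, hs]⟩
  else 0

open Classical in
lemma boundary_boundary (K : SComplex V) (m : ℕ) (z : K.chains k (m+2)) :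
    K.boundary k m (K.boundary k (m+1) z) = 0 := by
  funext τ
  obtain ⟨s, hs⟩ := τ
  rw [boundary_apply' K m _ s hs, Pi.zero_apply]
  have step1 : ∀ v : V, (if h : v ∉ s ∧ insert v s ∈ K.faces then
      ee k s v * K.boundary k (m+1) z ⟨insert v s, h.2, by
        rw [Finset.card_insert_of_notMem h.1, hs.2]⟩ else 0) =
      ∑ u : V, dd K m z s hs.2 v u := by
    intro v
    by_cases h : v ∉ s ∧ insert v s ∈ K.faces
    · rw [dif_pos h, boundary_apply' K (m+1) z (insert v s)
        ⟨h.2, by rw [Finset.card_insert_of_notMem h.1, hs.2]⟩, Finset.mul_sum]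
      refine Finset.sum_congr rfl fun u _ => ?_
      rw [dd]
      by_cases h2 : u ∉ insert v s ∧ insert u (insert v s) ∈ K.faces
      · rw [dif_pos h2, dif_pos (show (v ∉ s ∧ u ∉ s ∧ v ≠ u) ∧
            insert u (insert v s) ∈ K.faces from
          ⟨⟨h.1, fun hc => h2.1 (Finset.mem_insert_of_mem hc),
            fun hc => h2.1 (hc ▸ Finset.mem_insert_self v s)⟩, h2.2⟩), ← mul_assoc]
      · rw [dif_neg h2, dif_neg (show ¬((v ∉ s ∧ u ∉ s ∧ v ≠ u) ∧
            insert u (insert v s) ∈ K.faces) from ?_), mul_zero]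
        rintro ⟨⟨-, hus, hvu⟩, hK2⟩
        refine h2 ⟨?_, hK2⟩
        simp only [Finset.mem_insert]
        rintro (h' | h')
        · exact hvu h'.symm
        · exact hus h'
    · rw [dif_neg h]
      refine (Finset.sum_eq_zero fun u _ => ?_).symm
      rw [dd, dif_neg (fun hc => h ⟨hc.1.1,
        K.down_closed hc.2 (Finset.subset_insert u (insert v s))⟩)]
  calc (∑ v : V, if h : v ∉ s ∧ insert v s ∈ K.faces then
      ee k s v * K.boundary k (m+1) z ⟨insert v s, h.2, by
        rw [Finset.card_insert_of_notMem h.1, hs.2]⟩ else 0)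
      = ∑ v : V, ∑ u : V, dd K m z s hs.2 v u := Finset.sum_congr rfl fun v _ => step1 v
    _ = ∑ p : V × V, dd K m z s hs.2 p.1 p.2 := by
        rw [← Finset.univ_product_univ, Finset.sum_product]
    _ = 0 := ?_
  apply Finset.sum_involution (fun p _ => (p.2, p.1))
  · intro p _
    rcases p with ⟨v, u⟩
    dsimp only
    by_cases hvu : v = u
    · rw [dd, dd, dif_neg (fun hc => hc.1.2.2 hvu), dif_neg (fun hc => hc.1.2.2 hvu.symm),
        add_zero]
    · rw [dd, dd]
      by_cases h : (v ∉ s ∧ u ∉ s ∧ v ≠ u) ∧ insert u (insert v s) ∈ K.faces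
      · have hcomm : insert u (insert v s) = insert v (insert u s) := Finset.insert_comm u v s
        rw [dif_pos h, dif_pos (show (u ∉ s ∧ v ∉ s ∧ u ≠ v) ∧
            insert v (insert u s) ∈ K.faces from
          ⟨⟨h.1.2.1, h.1.1, fun hc => hvu hc.symm⟩, hcomm ▸ h.2⟩)]
        simp only [hcomm]
        rw [ee_swap (show v ≠ u from hvu) h.1.1 h.1.2.1, neg_mul, neg_add_cancel]
      · rw [dif_neg h, dif_neg (show ¬((u ∉ s ∧ v ∉ s ∧ u ≠ v) ∧
            insert v (insert u s) ∈ K.faces) from ?_), add_zero]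
        rintro ⟨⟨hus, hvs, huv⟩, hK2⟩
        exact h ⟨⟨hvs, hus, fun hc => huv hc.symm⟩, (Finset.insert_comm v u s) ▸ hK2⟩
  · intro p _ hne
    rcases p with ⟨v, u⟩
    dsimp only
    intro hc
    rw [Prod.mk.injEq] at hc
    apply hne
    rw [dd, dif_neg (fun hq => hq.1.2.2 hc.1.symm)]
  · intro p _
    exact Finset.mem_univ _
  · intro p _
    rfl

lemma psi_zero (m : ℕ) : psi k K x m (0 : K.chains k (m+1)) = 0 := by
  funext G
  simp only [psi, Pi.zero_apply, mul_zero]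

lemma psi_sub (m : ℕ) (z w : K.chains k (m+1)) :
    psi k K x m (z - w) = psi k K x m z - psi k K x m w := by
  funext G
  simp only [psi, Pi.sub_apply]
  ring

lemma rho_zero (m : ℕ) : rho k K x m (0 : K.chains k m) = 0 := rfl

lemma chase (K : SComplex V) (x : V) (j : ℕ)
    (hD : (K.deletion x).cycles k j ≤ LinearMap.range ((K.deletion x).boundary k j))
    (hL : ∀ j', j = j' + 1 →
      (K.link x).cycles k j' ≤ LinearMap.range ((K.link x).boundary k j')) :
    K.cycles k j ≤ LinearMap.range (K.boundary k j) := by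
  intro z hz
  rcases j with _ | n
  · obtain ⟨d, hd⟩ := hD (Submodule.mem_top (x := rho k K x 0 z))
    refine ⟨iota k K x 1 d, ?_⟩
    rw [boundary_iota, hd, ← eq_iota_rho₀]
  · have hzc : K.boundary k n z = 0 := LinearMap.mem_ker.mp hz
    have hpsic : psi k K x n z ∈ (K.link x).cycles k n := by
      rcases n with _ | n'
      · exact Submodule.mem_top
      · refine LinearMap.mem_ker.mpr ?_
        have h2 := psi_boundary (K := K) (x := x) n' z
        rw [hzc, psi_zero] at h2
        exact (neg_eq_zero.mp h2.symm)
    obtain ⟨w, hw⟩ := hL n rfl hpsic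
    set u := z + K.boundary k (n+1) (phi k K x (n+1) w) with hu
    have hpsiu : psi k K x n u = 0 := by
      rw [hu, psi_add, boundary_phi, psi_sub, psi_extLK, psi_phi, hw, zero_sub,
        add_neg_cancel]
    have hcyc : rho k K x (n+1) u ∈ (K.deletion x).cycles k (n+1) := by
      refine LinearMap.mem_ker.mpr ?_
      have h3 := rho_boundary (K := K) (x := x) n u
      have h4 : K.boundary k n u = 0 := by
        rw [hu, map_add, hzc, boundary_boundary, zero_add]
      rw [h4, rho_zero, hpsiu, extLD_zero, add_zero] at h3
      exact h3.symm
    obtain ⟨d, hd⟩ := hD hcyc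
    refine ⟨iota k K x (n+2) d - phi k K x (n+1) w, ?_⟩
    rw [map_sub, boundary_iota, hd, ← eq_iota_rho n u hpsiu, hu]
    exact add_sub_cancel_right z _

end Rels

lemma subsingleton_redHomology_iff (K : SComplex V) (m : ℕ) :
    Subsingleton (K.redHomology k m) ↔
      K.cycles k m ≤ LinearMap.range (K.boundary k m) := by
  rw [show Subsingleton (K.redHomology k m) ↔ Subsingleton
    ((K.cycles k m) ⧸ Submodule.comap (K.cycles k m).subtype
      (LinearMap.range (K.boundary k m))) from Iff.rfl,
    Submodule.Quotient.subsingleton_iff, Submodule.comap_subtype_eq_top]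

lemma main (K : SComplex V) (x : V) (j : ℕ) (h : Nontrivial (K.redHomology k j)) :
    Nontrivial ((K.deletion x).redHomology k j) ∨
      ∃ j', j = j' + 1 ∧ Nontrivial ((K.link x).redHomology k j') := by
  by_contra hc
  push_neg at hc
  obtain ⟨h1, h2⟩ := hc
  rw [subsingleton_redHomology_iff] at h1
  have h2' : ∀ j', j = j' + 1 →
      (K.link x).cycles k j' ≤ LinearMap.range ((K.link x).boundary k j') := by
    intro j' hj'
    have := h2 j' hj'
    rwa [subsingleton_redHomology_iff] at this
  exact (not_nontrivial_iff_subsingleton.mpr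
    ((subsingleton_redHomology_iff K j).mpr (chase K x j h1 h2'))) h

lemma scomplex_ext {K L : SComplex V} (h : K.faces = L.faces) : K = L := by
  cases K; cases L; cases h; rfl

lemma restrict_deletion (K : SComplex V) (x : V) (S : Set V) :
    (K.restrict S).deletion x = (K.deletion x).restrict S := by
  apply scomplex_ext
  ext s
  constructor
  · rintro ⟨⟨h1, h2⟩, h3⟩
    exact ⟨⟨h1, h3⟩, h2⟩
  · rintro ⟨⟨h1, h3⟩, h2⟩
    exact ⟨⟨h1, h2⟩, h3⟩

lemma restrict_link (K : SComplex V) (x : V) (S : Set V) (hx : x ∈ S) :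
    (K.restrict S).link x = (K.link x).restrict S := by
  apply scomplex_ext
  ext s
  constructor
  · rintro ⟨⟨h1, h2⟩, h3, h4, h5⟩
    exact ⟨⟨h1, h3, h4⟩, h2⟩
  · rintro ⟨⟨h1, h3, h4⟩, h2⟩
    refine ⟨⟨h1, h2⟩, h3, h4, ?_⟩
    rw [Finset.coe_insert]
    exact Set.insert_subset hx h2

lemma restrict_eq_deletion_restrict (K : SComplex V) (x : V) (S : Set V) (hx : x ∉ S) :
    K.restrict S = (K.deletion x).restrict S := by
  apply scomplex_ext
  ext s
  constructor
  · rintro ⟨h1, h2⟩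
    exact ⟨⟨h1, fun hc => hx (h2 hc)⟩, h2⟩
  · rintro ⟨⟨h1, -⟩, h2⟩
    exact ⟨h1, h2⟩

lemma reg_set_bddAbove (C : SComplex V) :
    BddAbove {j : ℕ | ∃ S : Set V, Nontrivial ((C.restrict S).redHomology k j)} := by
  refine ⟨Fintype.card V, fun j hj => ?_⟩
  obtain ⟨S, hS⟩ := hj
  by_contra hlt
  push_neg at hlt
  have hem : IsEmpty {s : Finset V // s ∈ ((C.restrict S)).faces ∧ s.card = j} := by
    refine ⟨fun s => ?_⟩
    have := s.2.2 ▸ Finset.card_le_univ s.1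
    omega
  haveI hch : Subsingleton ((C.restrict S).chains k j) :=
    ⟨fun f g => funext fun a => (hem.false a).elim⟩
  haveI hcy : Subsingleton ((C.restrict S).cycles k j) :=
    ⟨fun a b => Subtype.ext (Subsingleton.elim _ _)⟩
  haveI : Subsingleton ((C.restrict S).redHomology k j) :=
    (Submodule.Quotient.mk_surjective _).subsingleton
  exact (not_nontrivial_iff_subsingleton.mpr this) hS

end SComplexMV

theorem stmt_17 {V : Type*} [LinearOrder V] [Fintype V] (k : Type*) [Field k]
    (Δ : SComplex V) (x : V) :
    Δ.reg k ≤ max ((Δ.deletion x).reg k) ((Δ.link x).reg k + 1) := by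
  rw [SComplex.reg]
  refine csSup_le' ?_
  rintro j ⟨S, hS⟩
  by_cases hxS : x ∈ S
  · rcases SComplexMV.main (Δ.restrict S) x j hS with h | ⟨j', rfl, h⟩
    · rw [SComplexMV.restrict_deletion] at h
      exact le_max_of_le_left (le_csSup (SComplexMV.reg_set_bddAbove _) ⟨S, h⟩)
    · rw [SComplexMV.restrict_link Δ x S hxS] at h
      exact le_max_of_le_right
        (Nat.add_le_add_right (le_csSup (SComplexMV.reg_set_bddAbove _) ⟨S, h⟩) 1)
  · rw [SComplexMV.restrict_eq_deletion_restrict Δ x S hxS] at hS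
    exact le_max_of_le_left (le_csSup (SComplexMV.reg_set_bddAbove _) ⟨S, hS⟩)
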